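/- The function Q ↦ log τ(Q) is strictly concave on 𝒬: for all Q_1, Q_2 ∈ 𝒬 with Q_1 ≠ Q_2 and all t ∈ (0,1), log τ(tQ_1 + (1−t)Q_2) > t·log τ(Q_1) + (1−t)·log τ(Q_2). Moreover, 𝒬 is a convex set and τ(Q) > 0 for every Q ∈ 𝒬. -/

import Mathlib

open Matrix Finset

/-- `Θ(Q)`: `Θ(Q)_{ij} = −Q_{ij}` for `i ≠ j` and `Θ(Q)_{ii} = ∑_{j≠i} Q_{ij}`. -/
noncomputable def thetaOf {d : ℕ} (Q : Matrix (Fin d) (Fin d) ℝ) :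
    Matrix (Fin d) (Fin d) ℝ :=
  Matrix.of fun i j => if i = j then ∑ l ∈ univ.filter (fun l => l ≠ i), Q i l else -Q i j

/-- Membership in `𝒬`: symmetric, zero diagonal, and `xᵀΘ(Q)x > 0` for every nonzero
`x` with `∑ᵢ xᵢ = 0`. -/
def memQ {d : ℕ} (Q : Matrix (Fin d) (Fin d) ℝ) : Prop :=
  Q.IsSymm ∧ (∀ i, Q i i = 0) ∧
    ∀ x : Fin d → ℝ, x ≠ 0 → (∑ i, x i) = 0 → 0 < x ⬝ᵥ (thetaOf Q).mulVec x

/-- The centering matrix `P = I − (1/d)𝟙𝟙ᵀ`. -/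
noncomputable def Pmat (d : ℕ) : Matrix (Fin d) (Fin d) ℝ :=
  1 - ((d : ℝ)⁻¹) • Matrix.of (fun _ _ : Fin d => (1 : ℝ))

/-- `S` is the matrix `Σ(Q)`: the unique symmetric matrix with `Σ(Q)𝟙 = 0` and
`Θ(Q)Σ(Q) = P`. -/
def isSigmaOf {d : ℕ} (Q S : Matrix (Fin d) (Fin d) ℝ) : Prop :=
  S.IsSymm ∧ S.mulVec (fun _ => 1) = 0 ∧ thetaOf Q * S = Pmat d

/-- The variogram associated with `Σ`: `Γ_{ij} = Σ_{ii} + Σ_{jj} − 2Σ_{ij}`. -/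
noncomputable def gammaOf {d : ℕ} (S : Matrix (Fin d) (Fin d) ℝ) :
    Matrix (Fin d) (Fin d) ℝ :=
  Matrix.of fun i j => S i i + S j j - 2 * S i j

/-- The inner product `⟨A, B⟩ = ∑_{i<j} A_{ij} B_{ij}` on symmetric matrices with
zero diagonal. -/
noncomputable def sinner {d : ℕ} (A B : Matrix (Fin d) (Fin d) ℝ) : ℝ :=
  ∑ p ∈ univ.filter (fun p : Fin d × Fin d => p.1 < p.2), A p.1 p.2 * B p.1 p.2

open Classical in
/-- The spanning tree polynomial `τ(Q) = ∑_T ∏_{{i,j}∈T} Q_{ij}`, summed over all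
spanning trees of the complete graph on `{1, …, d}`. -/
noncomputable def tau {d : ℕ} (Q : Matrix (Fin d) (Fin d) ℝ) : ℝ :=
  ∑ T ∈ (univ : Finset (SimpleGraph (Fin d))).filter (fun T => T.IsTree),
    ∏ p ∈ univ.filter (fun p : Fin d × Fin d => p.1 < p.2 ∧ T.Adj p.1 p.2), Q p.1 p.2

/-- The Cayley–Menger matrix of `Γ`. -/
noncomputable def CM {d : ℕ} (Γ : Matrix (Fin d) (Fin d) ℝ) :
    Matrix (Fin (d + 1)) (Fin (d + 1)) ℝ :=
  Matrix.of fun a b =>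
    if ha : (a : ℕ) < d then
      (if hb : (b : ℕ) < d then -Γ ⟨a, ha⟩ ⟨b, hb⟩ / 2 else 1)
    else (if (b : ℕ) < d then -1 else 0)

/-- Membership in the cone `𝒞^d` of symmetric matrices with zero diagonal that are
strictly conditionally negative definite. -/
def memC {d : ℕ} (Γ : Matrix (Fin d) (Fin d) ℝ) : Prop :=
  Γ.IsSymm ∧ (∀ i, Γ i i = 0) ∧
    ∀ x : Fin d → ℝ, x ≠ 0 → (∑ i, x i) = 0 → x ⬝ᵥ Γ.mulVec x < 0

open Matrix Finset

/-- Total unimodularity style lemma: a square real matrix each of whose columns has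
at most one `+1`, at most one `-1` and zeros elsewhere has determinant `0`, `1` or `-1`. -/
lemma tu_det : ∀ (n : ℕ) (M : Matrix (Fin n) (Fin n) ℝ),
    (∀ j, ∃ P N : Finset (Fin n), P.card ≤ 1 ∧ N.card ≤ 1 ∧ Disjoint P N ∧
      ∀ i, M i j = (if i ∈ P then 1 else 0) - (if i ∈ N then 1 else 0)) →
    M.det = 0 ∨ M.det = 1 ∨ M.det = -1 := by
  intro n
  induction n with
  | zero =>
    intro M _
    right; left
    simp [Matrix.det_fin_zero]
  | succ n ih =>
    intro M hM
    by_cases hz : ∃ j, ∀ i, M i j = 0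
    · obtain ⟨j, hj⟩ := hz
      exact Or.inl (Matrix.det_eq_zero_of_column_eq_zero j hj)
    by_cases hs : ∃ j i, (∀ i', i' ≠ i → M i' j = 0) ∧ (M i j = 1 ∨ M i j = -1)
    · obtain ⟨j, i, hcol, hval⟩ := hs
      have hexp := Matrix.det_succ_column M j
      rw [Finset.sum_eq_single i (fun b _ hb => by rw [hcol b hb]; ring)
        (fun h => absurd (Finset.mem_univ i) h)] at hexp
      -- the minor satisfies the hypothesis
      have hminor : ∀ k, ∃ P N : Finset (Fin n), P.card ≤ 1 ∧ N.card ≤ 1 ∧ Disjoint P N ∧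
          ∀ i', (M.submatrix i.succAbove j.succAbove) i' k =
            (if i' ∈ P then 1 else 0) - (if i' ∈ N then 1 else 0) := by
        intro k
        obtain ⟨P, N, hP, hN, hPN, hent⟩ := hM (j.succAbove k)
        refine ⟨univ.filter (fun i' => i.succAbove i' ∈ P),
          univ.filter (fun i' => i.succAbove i' ∈ N), ?_, ?_, ?_, ?_⟩
        · refine le_trans (Finset.card_le_card_of_injOn (fun i' => i.succAbove i')
            (fun a ha => (Finset.mem_filter.mp ha).2)
            (fun a _ b _ h => Fin.succAbove_right_injective h)) hP
        · refine le_trans (Finset.card_le_card_of_injOn (fun i' => i.succAbove i')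
            (fun a ha => (Finset.mem_filter.mp ha).2)
            (fun a _ b _ h => Fin.succAbove_right_injective h)) hN
        · rw [Finset.disjoint_left]
          intro a haP haN
          exact (Finset.disjoint_left.mp hPN) (Finset.mem_filter.mp haP).2
            (Finset.mem_filter.mp haN).2
        · intro i'
          simp only [Matrix.submatrix_apply, hent, Finset.mem_filter, Finset.mem_univ, true_and]
      rcases ih _ hminor with hm | hm | hm <;>
        rcases hval with hv | hv <;>
        rcases Nat.even_or_odd ((i : ℕ) + (j : ℕ)) with he | he <;>
        [skip; skip; skip; skip; skip; skip; skip; skip; skip; skip; skip; skip] <;>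
        first
        | (rw [hexp, hm, hv, Even.neg_one_pow he]; norm_num)
        | (rw [hexp, hm, hv, Odd.neg_one_pow he]; norm_num)
    · -- every column has exactly one +1 and one -1; rows sum to zero
      push_neg at hz hs
      left
      have hcols : ∀ j, ∑ i, M i j = 0 := by
        intro j
        obtain ⟨P, N, hP, hN, hPN, hent⟩ := hM j
        rcases Nat.le_one_iff_eq_zero_or_eq_one.mp hP with hP0 | hP1
        · rcases Nat.le_one_iff_eq_zero_or_eq_one.mp hN with hN0 | hN1
          · obtain ⟨i0, hi0⟩ := hz j
            rw [Finset.card_eq_zero] at hP0 hN0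
            subst hP0; subst hN0
            simp at hent
            exact absurd (hent i0) hi0
          · obtain ⟨b, rfl⟩ := Finset.card_eq_one.mp hN1
            rw [Finset.card_eq_zero] at hP0; subst hP0
            exact ((hs j b (fun i' hi' => by simp [hent, hi'])).2 (by simp [hent])).elim
        · obtain ⟨a, rfl⟩ := Finset.card_eq_one.mp hP1
          rcases Nat.le_one_iff_eq_zero_or_eq_one.mp hN with hN0 | hN1
          · rw [Finset.card_eq_zero] at hN0; subst hN0
            exact ((hs j a (fun i' hi' => by simp [hent, hi'])).1 (by simp [hent])).elim
          · obtain ⟨b, rfl⟩ := Finset.card_eq_one.mp hN1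
            have hab : a ≠ b := by
              intro h; subst h
              exact (Finset.disjoint_left.mp hPN (Finset.mem_singleton_self a))
                (Finset.mem_singleton_self a)
            simp only [hent, Finset.mem_singleton]
            rw [Finset.sum_sub_distrib]
            rw [Finset.sum_ite_eq' univ a (fun _ => (1:ℝ)), Finset.sum_ite_eq' univ b (fun _ => (1:ℝ))]
            simp
      refine (Matrix.exists_vecMul_eq_zero_iff).mp ⟨fun _ => 1, ?_, ?_⟩
      · intro h
        have := congrFun h 0
        norm_num at this
      · funext j
        simpa [Matrix.vecMul, dotProduct] using hcols j


open Matrix Finset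

section MT

variable {m : ℕ}

/-- ordered pairs `(i,j)` with `i < j`: the potential edges. -/
def Epairs (m : ℕ) : Finset (Fin (m+1) × Fin (m+1)) := univ.filter fun p => p.1 < p.2

/-- signed incidence column of a pair. -/
noncomputable def colv {m : ℕ} (p : Fin (m+1) × Fin (m+1)) : Fin (m+1) → ℝ :=
  fun a => (if a = p.1 then 1 else 0) - (if a = p.2 then 1 else 0)

/-- incidence column with the last vertex deleted. -/
noncomputable def colr {m : ℕ} (p : Fin (m+1) × Fin (m+1)) : Fin m → ℝ :=
  fun a => colv p a.castSucc

/-- the graph whose edges are the pairs in `S`. -/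
def graphOf {m : ℕ} (S : Finset (Fin (m+1) × Fin (m+1))) : SimpleGraph (Fin (m+1)) where
  Adj a b := a ≠ b ∧ ((a, b) ∈ S ∨ (b, a) ∈ S)
  symm := ⟨fun a b h => ⟨h.1.symm, h.2.symm⟩⟩
  loopless := ⟨fun a h => h.1 rfl⟩

/-- the reduced incidence matrix with rows indexed by edges via `g`. -/
noncomputable def Cmat {m : ℕ} (g : Fin m → Fin (m+1) × Fin (m+1)) :
    Matrix (Fin m) (Fin m) ℝ := Matrix.of fun a b => colr (g a) b

lemma colv_dot (p : Fin (m+1) × Fin (m+1)) (x : Fin (m+1) → ℝ) :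
    ∑ a, colv p a * x a = x p.1 - x p.2 := by
  simp [colv, sub_mul, ite_mul, Finset.sum_sub_distrib, Finset.sum_ite_eq']

lemma colr_dot (p : Fin (m+1) × Fin (m+1)) (y : Fin m → ℝ) :
    ∑ b, colr p b * y b = (Fin.snoc y (0:ℝ) : Fin (m+1) → ℝ) p.1 - (Fin.snoc y (0:ℝ) : Fin (m+1) → ℝ) p.2 := by
  rw [← colv_dot p (Fin.snoc y (0:ℝ) : Fin (m+1) → ℝ), Fin.sum_univ_castSucc]
  simp [colr]

lemma cmat_mulVec (g : Fin m → Fin (m+1) × Fin (m+1)) (y : Fin m → ℝ) (a : Fin m) :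
    (Cmat g *ᵥ y) a = (Fin.snoc y (0:ℝ) : Fin (m+1) → ℝ) (g a).1 - (Fin.snoc y (0:ℝ) : Fin (m+1) → ℝ) (g a).2 := by
  rw [Matrix.mulVec, dotProduct, ← colr_dot]
  rfl

lemma cmat_det_cases {S : Finset (Fin (m+1) × Fin (m+1))} (hS : S ⊆ Epairs m)
    (g : Fin m → Fin (m+1) × Fin (m+1)) (hg : ∀ a, g a ∈ S) :
    (Cmat g).det = 0 ∨ (Cmat g).det = 1 ∨ (Cmat g).det = -1 := by
  rw [← Matrix.det_transpose]
  apply tu_det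
  intro a
  have hlt : (g a).1 < (g a).2 := by
    have := hS (hg a); simpa [Epairs] using this
  refine ⟨univ.filter (fun i : Fin m => i.castSucc = (g a).1),
    univ.filter (fun i : Fin m => i.castSucc = (g a).2), ?_, ?_, ?_, ?_⟩
  · apply Finset.card_le_one.mpr
    intro x hx y hy
    have hx' := (Finset.mem_filter.mp hx).2
    have hy' := (Finset.mem_filter.mp hy).2
    exact Fin.castSucc_injective m (hx'.trans hy'.symm)
  · apply Finset.card_le_one.mpr
    intro x hx y hy
    have hx' := (Finset.mem_filter.mp hx).2
    have hy' := (Finset.mem_filter.mp hy).2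
    exact Fin.castSucc_injective m (hx'.trans hy'.symm)
  · rw [Finset.disjoint_left]
    intro x hx1 hx2
    have h1 := (Finset.mem_filter.mp hx1).2
    have h2 := (Finset.mem_filter.mp hx2).2
    exact absurd (h1.symm.trans h2) (ne_of_lt hlt)
  · intro i
    simp [Cmat, colr, colv]

lemma eq_on_reachable {S : Finset (Fin (m+1) × Fin (m+1))}
    (x : Fin (m+1) → ℝ) (hx : ∀ p ∈ S, x p.1 = x p.2) {a b : Fin (m+1)}
    (h : (graphOf S).Reachable a b) : x a = x b := by
  obtain ⟨w⟩ := h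
  induction w with
  | nil => rfl
  | cons h' p ih =>
    rcases h'.2 with hm | hm
    · exact (hx _ hm).trans ih
    · exact ((hx _ hm).symm).trans ih

lemma cmat_det_ne_zero_of_connected {S : Finset (Fin (m+1) × Fin (m+1))}
    (g : Fin m → Fin (m+1) × Fin (m+1)) (hg : ∀ p ∈ S, ∃ a, g a = p)
    (hconn : (graphOf S).Connected) : (Cmat g).det ≠ 0 := by
  intro hdet
  obtain ⟨y, hy0, hy⟩ := (Matrix.exists_mulVec_eq_zero_iff).mpr hdet
  set x : Fin (m+1) → ℝ := (Fin.snoc y (0:ℝ) : Fin (m+1) → ℝ) with hxdef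
  have hedge : ∀ p ∈ S, x p.1 = x p.2 := by
    intro p hp
    obtain ⟨a, rfl⟩ := hg p hp
    have := congrFun hy a
    rw [cmat_mulVec] at this
    simpa [sub_eq_zero] using this
  have hconst : ∀ a, x a = 0 := by
    intro a
    have := eq_on_reachable x hedge (hconn.preconnected a (Fin.last m))
    rw [this, hxdef]
    simp
  apply hy0
  funext b
  have := hconst b.castSucc
  simpa [hxdef] using this

lemma cmat_det_eq_zero_of_not_connected {S : Finset (Fin (m+1) × Fin (m+1))}
    (hS : S ⊆ Epairs m) (g : Fin m → Fin (m+1) × Fin (m+1)) (hg : ∀ a, g a ∈ S)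
    (hconn : ¬ (graphOf S).Connected) : (Cmat g).det = 0 := by
  classical
  have : ∃ u, ¬ (graphOf S).Reachable u (Fin.last m) := by
    by_contra h
    push_neg at h
    exact hconn ⟨fun a b => (h a).trans (h b).symm⟩
  obtain ⟨u, hu⟩ := this
  set x : Fin (m+1) → ℝ := fun a => if (graphOf S).Reachable u a then 1 else 0 with hxdef
  have hxlast : x (Fin.last m) = 0 := by simp [hxdef, hu]
  set y : Fin m → ℝ := fun b => x b.castSucc with hydef
  have hsnoc : Fin.snoc y (0:ℝ) = x := by
    funext a
    refine Fin.lastCases ?_ ?_ a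
    · simp [hxlast]
    · intro i; simp [hydef]
  apply (Matrix.exists_mulVec_eq_zero_iff).mp
  refine ⟨y, ?_, ?_⟩
  · intro h0
    have hune : u ≠ Fin.last m := by
      intro h; apply hu; rw [h]
    have hulm : (u : ℕ) < m := Fin.val_lt_last hune
    have : y ⟨u, hulm⟩ = 1 := by
      simp only [hydef]
      have : (⟨u, hulm⟩ : Fin m).castSucc = u := by
        ext; simp
      rw [this, hxdef]
      simp [SimpleGraph.Reachable.refl]
    rw [h0] at this
    simp at this
  · funext a
    rw [cmat_mulVec, hsnoc]
    have hadj : (graphOf S).Adj (g a).1 (g a).2 := by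
      refine ⟨?_, Or.inl (hg a)⟩
      have := hS (hg a)
      simp only [Epairs, Finset.mem_filter] at this
      exact ne_of_lt this.2
    have : (graphOf S).Reachable u (g a).1 ↔ (graphOf S).Reachable u (g a).2 :=
      ⟨fun h => h.trans hadj.reachable, fun h => h.trans hadj.symm.reachable⟩
    simp only [hxdef, Pi.zero_apply]
    by_cases hr : (graphOf S).Reachable u (g a).1
    · rw [if_pos hr, if_pos (this.mp hr)]; ring
    · rw [if_neg hr, if_neg (fun h => hr (this.mpr h))]; ring

end MT

section Cycle

variable {m : ℕ}

/-- the sorted pair underlying a dart. -/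
def epOf {m : ℕ} {G : SimpleGraph (Fin (m+1))} (dd : G.Dart) : Fin (m+1) × Fin (m+1) :=
  if dd.toProd.1 < dd.toProd.2 then dd.toProd else dd.toProd.swap

/-- the sign of a dart. -/
noncomputable def sgOf {m : ℕ} {G : SimpleGraph (Fin (m+1))} (dd : G.Dart) : ℝ :=
  if dd.toProd.1 < dd.toProd.2 then 1 else -1

lemma colv_dart {G : SimpleGraph (Fin (m+1))} (dd : G.Dart) :
    colv dd.toProd = sgOf dd • colv (epOf dd) := by
  by_cases h : dd.toProd.1 < dd.toProd.2
  · simp [epOf, sgOf, h]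
  · funext a
    simp only [epOf, sgOf, if_neg h, colv, Prod.fst_swap, Prod.snd_swap, Pi.smul_apply,
      smul_eq_mul]
    ring

lemma epOf_mem {S : Finset (Fin (m+1) × Fin (m+1))} (hS : S ⊆ Epairs m)
    (dd : (graphOf S).Dart) : epOf dd ∈ S := by
  rcases dd.adj.2 with hm | hm
  · have hlt : dd.toProd.1 < dd.toProd.2 := by
      have := hS hm; simpa [Epairs] using this
    simpa [epOf, hlt] using hm
  · have hlt : dd.toProd.2 < dd.toProd.1 := by
      have := hS hm; simpa [Epairs] using this
    rw [epOf, if_neg (not_lt.mpr hlt.le)]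
    exact hm

lemma darts_telescope {S : Finset (Fin (m+1) × Fin (m+1))} :
    ∀ {u v : Fin (m+1)} (w : (graphOf S).Walk u v),
      (w.darts.map (fun dd => colv dd.toProd)).sum = colv (u, v) := by
  intro u v w
  induction w with
  | nil => funext a; simp [colv]
  | cons h' p ih =>
    rw [SimpleGraph.Walk.darts_cons, List.map_cons, List.sum_cons, ih]
    funext a
    simp only [colv, Pi.add_apply]
    ring

lemma list_regroup {S : Finset (Fin (m+1) × Fin (m+1))} (hS : S ⊆ Epairs m) :
    ∀ l : List ((graphOf S).Dart),
      (l.map (fun dd => colv dd.toProd)).sum =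
        ∑ p ∈ S, ((l.map (fun dd => if epOf dd = p then sgOf dd else 0)).sum) • colv p := by
  intro l
  induction l with
  | nil => simp
  | cons dd l ih =>
    simp only [List.map_cons, List.sum_cons, ih]
    rw [colv_dart dd]
    have : ∀ p ∈ S, ((if epOf dd = p then sgOf dd else 0) +
        (l.map (fun dd => if epOf dd = p then sgOf dd else 0)).sum) • colv p =
        (if epOf dd = p then sgOf dd else 0) • colv p +
        ((l.map (fun dd => if epOf dd = p then sgOf dd else 0)).sum) • colv p := by
      intro p _; rw [add_smul]
    rw [Finset.sum_congr rfl this, Finset.sum_add_distrib]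
    congr 1
    have : ∀ p ∈ S, (if epOf dd = p then sgOf dd else 0) • colv p =
        if epOf dd = p then sgOf dd • colv p else 0 := by
      intro p _
      by_cases h : epOf dd = p <;> simp [h]
    rw [Finset.sum_congr rfl this, Finset.sum_ite_eq S (epOf dd) (fun p => sgOf dd • colv p),
      if_pos (epOf_mem hS dd)]

lemma acyclic_of_connected {S : Finset (Fin (m+1) × Fin (m+1))} (hS : S ⊆ Epairs m)
    (hcard : S.card = m) (hconn : (graphOf S).Connected) : (graphOf S).IsAcyclic := by
  classical
  intro v c hc
  -- an indexing of S by Fin m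
  have hcards : Fintype.card {p // p ∈ S} = m := by rw [Fintype.card_coe, hcard]
  set e : {p // p ∈ S} ≃ Fin m := Fintype.equivFinOfCardEq hcards with he
  set g : Fin m → Fin (m+1) × Fin (m+1) := fun a => (e.symm a).val with hg
  have hgmem : ∀ a, g a ∈ S := fun a => (e.symm a).2
  have hgsurj : ∀ p ∈ S, ∃ a, g a = p := fun p hp => ⟨e ⟨p, hp⟩, by simp [hg]⟩
  have hdet_ne := cmat_det_ne_zero_of_connected g hgsurj hconn
  apply hdet_ne
  -- the signed cycle coefficients
  set κ : Fin (m+1) × Fin (m+1) → ℝ :=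
    fun p => (c.darts.map (fun dd => if epOf dd = p then sgOf dd else 0)).sum with hκ
  have hzero : ∑ p ∈ S, κ p • colv p = 0 := by
    rw [← list_regroup hS, darts_telescope]
    funext a; simp [colv]
  -- the head dart
  have hlen : c.darts ≠ [] := by
    intro h
    have := SimpleGraph.Walk.length_darts c
    rw [h] at this
    simp only [List.length_nil] at this
    have h3 := hc.three_le_length
    omega
  obtain ⟨dd₀, l, hl⟩ := List.exists_cons_of_ne_nil hlen
  have hnodup : (c.darts.map (fun dd => epOf dd)).Nodup := by
    have hedges := hc.edges_nodup
    have : c.edges = (c.darts.map (fun dd => epOf dd)).map (fun p => s(p.1, p.2)) := by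
      rw [SimpleGraph.Walk.edges, List.map_map]
      congr 1
      funext dd
      simp only [Function.comp_apply, SimpleGraph.Dart.edge]
      by_cases h : dd.toProd.1 < dd.toProd.2
      · simp [epOf, h]
      · simp only [epOf, if_neg h]
        exact (Sym2.mk_prod_swap_eq).symm
    rw [this] at hedges
    exact List.Nodup.of_map _ hedges
  have hκ0 : κ (epOf dd₀) = sgOf dd₀ := by
    show (List.map (fun dd => if epOf dd = epOf dd₀ then sgOf dd else 0) c.darts).sum = sgOf dd₀
    rw [hl, List.map_cons, List.sum_cons, if_pos rfl]
    have hrest : ∀ x ∈ l.map (fun dd => if epOf dd = epOf dd₀ then sgOf dd else 0), x = 0 := by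
      intro x hx
      obtain ⟨dd, hdd, rfl⟩ := List.mem_map.mp hx
      rw [if_neg]
      intro hcontra
      rw [hl, List.map_cons] at hnodup
      exact (List.nodup_cons.mp hnodup).1 (List.mem_map.mpr ⟨dd, hdd, hcontra⟩)
    rw [List.sum_eq_zero hrest, add_zero]
  have hsg : sgOf dd₀ ≠ 0 := by
    rw [sgOf]; split <;> norm_num
  -- the kernel vector on rows
  apply (Matrix.exists_vecMul_eq_zero_iff).mp
  refine ⟨fun a => κ (g a), ?_, ?_⟩
  · intro h0
    have := congrFun h0 (e ⟨epOf dd₀, epOf_mem hS dd₀⟩)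
    simp only [hg, Equiv.symm_apply_apply, Pi.zero_apply] at this
    rw [hκ0] at this
    exact hsg this
  · funext b
    show ∑ a : Fin m, κ (g a) * (Cmat g) a b = 0
    have hcomp : ∑ a : Fin m, κ (g a) * colr (g a) b = ∑ p ∈ S, κ p * colr p b := by
      rw [← Finset.sum_coe_sort S (fun p => κ p * colr p b)]
      exact Equiv.sum_comp e.symm (fun s => κ s.val * colr s.val b)
    have hz := congrFun hzero b.castSucc
    simp only [Finset.sum_apply, Pi.smul_apply, smul_eq_mul, Pi.zero_apply] at hz
    have : ∑ a : Fin m, κ (g a) * (Cmat g) a b = ∑ a : Fin m, κ (g a) * colr (g a) b := rfl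
    rw [this, hcomp]
    exact hz

end Cycle

section Entry

variable {m : ℕ}

/-- `Θ(Q)` with last row and column removed. -/
noncomputable def redT {m : ℕ} (Q : Matrix (Fin (m+1)) (Fin (m+1)) ℝ) :
    Matrix (Fin m) (Fin m) ℝ :=
  (thetaOf Q).submatrix Fin.castSucc Fin.castSucc

open Classical in
lemma redT_entry {Q : Matrix (Fin (m+1)) (Fin (m+1)) ℝ} (hQ : Q.IsSymm)
    (a b : Fin m) :
    redT Q a b = ∑ p ∈ Epairs m, (Q p.1 p.2 * colr p a) * colr p b := by
  set x := a.castSucc with hx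
  set y := b.castSucc with hy
  have hcolr : ∀ (p : Fin (m+1) × Fin (m+1)) (c : Fin m), colr p c = colv p c.castSucc :=
    fun p c => rfl
  by_cases hab : a = b
  · subst hab
    have key : ∀ p ∈ Epairs m, (Q p.1 p.2 * colr p a) * colr p a =
        (if p.1 = x then Q p.1 p.2 else 0) + (if p.2 = x then Q p.1 p.2 else 0) := by
      intro p hp
      have hplt : p.1 < p.2 := by simpa [Epairs] using hp
      rw [hcolr, ← hx]
      by_cases h1 : x = p.1
      · have h2 : x ≠ p.2 := by intro h; rw [← h1, ← h] at hplt; exact lt_irrefl x hplt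
        simp only [colv]
        rw [if_pos h1, if_neg h2, if_pos h1.symm, if_neg (fun h : p.2 = x => h2 h.symm)]
        ring
      · by_cases h2 : x = p.2
        · simp only [colv]
          rw [if_neg h1, if_pos h2, if_neg (fun h : p.1 = x => h1 h.symm), if_pos h2.symm]
          ring
        · simp only [colv]
          rw [if_neg h1, if_neg h2, if_neg (fun h : p.1 = x => h1 h.symm),
            if_neg (fun h : p.2 = x => h2 h.symm)]
          ring
    rw [Finset.sum_congr rfl key, Finset.sum_add_distrib]
    rw [← Finset.sum_filter, ← Finset.sum_filter]
    have him1 : (Epairs m).filter (fun p => p.1 = x) =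
        (univ.filter (fun l => x < l)).image (fun l => (x, l)) := by
      ext p
      simp only [Epairs, Finset.mem_filter, Finset.mem_univ, true_and, Finset.mem_image]
      constructor
      · rintro ⟨hlt, h1⟩
        exact ⟨p.2, h1 ▸ hlt, by rw [← h1]⟩
      · rintro ⟨l, hl, rfl⟩
        exact ⟨hl, rfl⟩
    have him2 : (Epairs m).filter (fun p => p.2 = x) =
        (univ.filter (fun l => l < x)).image (fun l => (l, x)) := by
      ext p
      simp only [Epairs, Finset.mem_filter, Finset.mem_univ, true_and, Finset.mem_image]
      constructor
      · rintro ⟨hlt, h2⟩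
        exact ⟨p.1, h2 ▸ hlt, by rw [← h2]⟩
      · rintro ⟨l, hl, rfl⟩
        exact ⟨hl, rfl⟩
    rw [him1, him2, Finset.sum_image (fun c _ c' _ h => (Prod.mk.injEq _ _ _ _).mp h |>.2),
      Finset.sum_image (fun c _ c' _ h => (Prod.mk.injEq _ _ _ _).mp h |>.1)]
    have hsym : ∀ l ∈ univ.filter (fun l => l < x), Q l x = Q x l := fun l _ => hQ.apply x l
    rw [Finset.sum_congr rfl hsym]
    have hsplit : (univ.filter (fun l => l ≠ x)) =
        (univ.filter (fun l => x < l)) ∪ (univ.filter (fun l => l < x)) := by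
      ext l
      simp only [Finset.mem_filter, Finset.mem_univ, true_and, Finset.mem_union]
      constructor
      · intro h; rcases lt_or_gt_of_ne h with h | h
        · exact Or.inr h
        · exact Or.inl h
      · rintro (h | h)
        · exact ne_of_gt h
        · exact ne_of_lt h
    have hdisj : Disjoint (univ.filter (fun l : Fin (m+1) => x < l))
        (univ.filter (fun l => l < x)) := by
      rw [Finset.disjoint_left]
      intro l h1 h2
      simp only [Finset.mem_filter] at h1 h2
      exact absurd (h1.2.trans h2.2) (lt_irrefl x)
    show thetaOf Q x x = _
    rw [thetaOf]
    simp only [Matrix.of_apply, if_pos (rfl : x = x)]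
    rw [hsplit, Finset.sum_union hdisj]
    simp
  · -- off-diagonal
    have hxy : x ≠ y := fun h => hab (Fin.castSucc_injective m h)
    have key : ∀ p ∈ Epairs m, p ≠ (x, y) → p ≠ (y, x) →
        (Q p.1 p.2 * colr p a) * colr p b = 0 := by
      intro p hp hne1 hne2
      have hplt : p.1 < p.2 := by simpa [Epairs] using hp
      rw [hcolr, hcolr, ← hx, ← hy]
      by_cases h1 : x = p.1
      · by_cases h2 : y = p.2
        · exact absurd (Prod.ext h1.symm h2.symm) hne1
        · have hy1 : y ≠ p.1 := fun h => hxy (h1.trans h.symm)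
          have : colv p y = 0 := by simp [colv, fun h : y = p.1 => hy1 h, h2]
          rw [this]; ring
      · by_cases h2 : x = p.2
        · by_cases h3 : y = p.1
          · exact absurd (Prod.ext h3.symm h2.symm) hne2
          · have hy2 : y ≠ p.2 := fun h => hxy (h2.trans h.symm)
            have : colv p y = 0 := by simp [colv, h3, hy2]
            rw [this]; ring
        · have : colv p x = 0 := by simp [colv, h1, h2]
          rw [this]; ring
    have hLHS : redT Q a b = -Q x y := by
      show thetaOf Q x y = -Q x y
      rw [thetaOf]
      simp only [Matrix.of_apply, if_neg hxy]
    rw [hLHS]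
    rcases lt_or_gt_of_ne hxy with hlt | hlt
    · rw [Finset.sum_eq_single_of_mem (x, y) (by simp [Epairs, hlt])]
      · have : colv (x, y) x = 1 ∧ colv (x, y) y = -1 := by
          constructor <;> simp [colv, hxy, hxy.symm]
        rw [hcolr, hcolr, ← hx, ← hy, this.1, this.2]
        ring
      · intro p hp hne
        apply key p hp hne
        intro h
        rw [h] at hp
        have : y < x := by simpa [Epairs] using hp
        exact absurd (hlt.trans this) (lt_irrefl _)
    · rw [Finset.sum_eq_single_of_mem (y, x) (by simp [Epairs, hlt])]
      · have : colv (y, x) x = -1 ∧ colv (y, x) y = 1 := by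
          constructor <;> simp [colv, hxy, hxy.symm]
        rw [hcolr, hcolr, ← hx, ← hy, this.1, this.2, hQ.apply x y]
        ring
      · intro p hp hne
        apply key p hp ?_ hne
        intro h
        rw [h] at hp
        have : x < y := by simpa [Epairs] using hp
        exact absurd (hlt.trans this) (lt_irrefl _)

end Entry

section Expand

variable {m : ℕ}

/-- canonical indexing of an `m`-element edge set by `Fin m`. -/
noncomputable def gcan {m : ℕ} (S : Finset (Fin (m+1) × Fin (m+1))) :
    Fin m → Fin (m+1) × Fin (m+1) :=
  fun a => if h : Fintype.card {p // p ∈ S} = m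
    then ((Fintype.equivFinOfCardEq h).symm a).val else (0, 0)

lemma gcan_card {S : Finset (Fin (m+1) × Fin (m+1))} (hcard : S.card = m) :
    Fintype.card {p // p ∈ S} = m := by rw [Fintype.card_coe, hcard]

lemma gcan_mem {S : Finset (Fin (m+1) × Fin (m+1))} (hcard : S.card = m) (a : Fin m) :
    gcan S a ∈ S := by
  rw [gcan, dif_pos (gcan_card hcard)]
  exact Subtype.mem _

lemma gcan_inj {S : Finset (Fin (m+1) × Fin (m+1))} (hcard : S.card = m) :
    Function.Injective (gcan S) := by
  intro a b hab
  simp only [gcan, dif_pos (gcan_card hcard)] at hab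
  exact (Equiv.injective _) (Subtype.val_injective hab)

lemma gcan_surj {S : Finset (Fin (m+1) × Fin (m+1))} (hcard : S.card = m) :
    ∀ p ∈ S, ∃ a, gcan S a = p := by
  intro p hp
  refine ⟨Fintype.equivFinOfCardEq (gcan_card hcard) ⟨p, hp⟩, ?_⟩
  rw [gcan, dif_pos (gcan_card hcard), Equiv.symm_apply_apply]

lemma gcan_image {S : Finset (Fin (m+1) × Fin (m+1))} (hcard : S.card = m) :
    univ.image (gcan S) = S := by
  ext p
  simp only [Finset.mem_image, Finset.mem_univ, true_and]
  constructor
  · rintro ⟨a, rfl⟩; exact gcan_mem hcard a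
  · intro hp; exact gcan_surj hcard p hp

open Classical in
lemma fiber_sum {Q : Matrix (Fin (m+1)) (Fin (m+1)) ℝ}
    {S : Finset (Fin (m+1) × Fin (m+1))}
    (hSsub : S ⊆ Epairs m) (hcard : S.card = m) :
    ∑ r ∈ ((Fintype.piFinset (fun _ : Fin m => Epairs m)).filter
        (fun r => Function.Injective r)).filter (fun r => univ.image r = S),
      (∏ a, Q (r a).1 (r a).2 * colr (r a) a) • (Cmat r).det
    = (∏ p ∈ S, Q p.1 p.2) * ((Cmat (gcan S)).det)^2 := by
  have hginj := gcan_inj hcard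
  have hgmem := gcan_mem hcard
  have hgimage := gcan_image hcard
  -- each permutation term
  have h2 : ∀ σ : Equiv.Perm (Fin m),
      (∏ a, Q (((gcan S) ∘ σ) a).1 (((gcan S) ∘ σ) a).2 * colr (((gcan S) ∘ σ) a) a) • (Cmat ((gcan S) ∘ σ)).det
      = (∏ p ∈ S, Q p.1 p.2) * (Cmat (gcan S)).det *
        (((Equiv.Perm.sign σ : ℤ) : ℝ) * ∏ a, colr ((gcan S) (σ a)) a) := by
    intro σ
    have h1 : Cmat ((gcan S) ∘ σ) = (Cmat (gcan S)).submatrix σ id := rfl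
    have hQprod : ∏ a, Q (((gcan S) ∘ σ) a).1 (((gcan S) ∘ σ) a).2 = ∏ p ∈ S, Q p.1 p.2 := by
      have e1 : ∏ p ∈ S, Q p.1 p.2 = ∏ a, Q (gcan S a).1 (gcan S a).2 := by
        conv_lhs => rw [← hgimage]
        rw [Finset.prod_image (fun a _ b _ h => hginj h)]
      rw [e1]
      exact Equiv.prod_comp σ (fun a => Q ((gcan S) a).1 ((gcan S) a).2)
    rw [Finset.prod_mul_distrib, hQprod, h1, Matrix.det_permute]
    simp only [Function.comp_apply, smul_eq_mul, Equiv.Perm.coe_mul] <;> try rfl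
    ring
  -- sum over permutations equals the RHS
  have hdet2 : ∑ σ : Equiv.Perm (Fin m),
      (∏ a, Q (((gcan S) ∘ σ) a).1 (((gcan S) ∘ σ) a).2 * colr (((gcan S) ∘ σ) a) a) • (Cmat ((gcan S) ∘ σ)).det
      = (∏ p ∈ S, Q p.1 p.2) * ((Cmat (gcan S)).det)^2 := by
    rw [Finset.sum_congr rfl (fun σ _ => h2 σ), ← Finset.mul_sum]
    have : ∑ σ : Equiv.Perm (Fin m),
        ((Equiv.Perm.sign σ : ℤ) : ℝ) * ∏ a, colr ((gcan S) (σ a)) a = (Cmat (gcan S)).det := by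
      rw [Matrix.det_apply']
      rfl
    rw [this]
    ring
  rw [← hdet2]
  -- bijection between permutations and the fiber
  refine (Finset.sum_bij (fun (σ : Equiv.Perm (Fin m)) _ => (gcan S) ∘ σ) ?_ ?_ ?_ ?_).symm
  · intro σ _
    simp only [Finset.mem_filter, Fintype.mem_piFinset]
    refine ⟨⟨fun a => hSsub (hgmem (σ a)), hginj.comp σ.injective⟩, ?_⟩
    conv_rhs => rw [← hgimage]
    rw [← Finset.image_image]
    congr 1
    ext b
    constructor
    · intro _; exact Finset.mem_univ b
    · intro _; exact Finset.mem_image.mpr ⟨σ.symm b, Finset.mem_univ _, σ.apply_symm_apply b⟩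
  · intro σ _ σ' _ h
    exact Equiv.ext (fun a => hginj (congrFun h a))
  · intro r hr
    simp only [Finset.mem_filter, Fintype.mem_piFinset] at hr
    obtain ⟨⟨hrval, hrinj⟩, hrim⟩ := hr
    have hrange : Set.range r = Set.range (gcan S) := by
      rw [← Set.image_univ, ← Set.image_univ, ← Finset.coe_univ, ← Finset.coe_image,
        ← Finset.coe_image, hrim, hgimage]
    have hkey : ∀ a, (gcan S) ((((Equiv.ofInjective r hrinj).trans (Equiv.setCongr hrange)).trans
        (Equiv.ofInjective (gcan S) hginj).symm) a) = r a := by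
      intro a
      simp only [Equiv.trans_apply]
      rw [Equiv.apply_ofInjective_symm hginj]
      rfl
    exact ⟨((Equiv.ofInjective r hrinj).trans (Equiv.setCongr hrange)).trans
      (Equiv.ofInjective (gcan S) hginj).symm, Finset.mem_univ _, by funext a; exact hkey a⟩
  · intro σ _
    rfl

open Classical in
lemma det_redT {Q : Matrix (Fin (m+1)) (Fin (m+1)) ℝ} (hQ : Q.IsSymm) :
    (redT Q).det = ∑ S ∈ (Epairs m).powersetCard m,
      (∏ p ∈ S, Q p.1 p.2) * ((Cmat (gcan S)).det)^2 := by
  have hrows : redT Q = Matrix.of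
      (fun a => ∑ p ∈ Epairs m, (Q p.1 p.2 * colr p a) • colr p) := by
    ext a b
    rw [redT_entry hQ]
    simp [Finset.sum_apply]
  have h1 : (redT Q).det = (Matrix.detRowAlternating :
      ((Fin m → ℝ) [⋀^Fin m]→ₗ[ℝ] ℝ)).toMultilinearMap
      (fun a => ∑ p ∈ Epairs m, (Q p.1 p.2 * colr p a) • colr p) := by
    rw [hrows]; rfl
  rw [h1, MultilinearMap.map_sum_finset]
  have h2 : ∀ r : Fin m → Fin (m+1) × Fin (m+1),
      (Matrix.detRowAlternating :
        ((Fin m → ℝ) [⋀^Fin m]→ₗ[ℝ] ℝ)).toMultilinearMap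
        (fun a => (Q (r a).1 (r a).2 * colr (r a) a) • colr (r a))
      = (∏ a, Q (r a).1 (r a).2 * colr (r a) a) • (Cmat r).det := by
    intro r
    rw [MultilinearMap.map_smul_univ]
    rfl
  rw [Finset.sum_congr rfl (fun r _ => h2 r)]
  rw [← Finset.sum_filter_add_sum_filter_not
    (Fintype.piFinset (fun _ : Fin m => Epairs m)) (fun r => Function.Injective r)]
  have hnoninj : ∑ r ∈ (Fintype.piFinset (fun _ : Fin m => Epairs m)).filter
      (fun r => ¬ Function.Injective r),
      (∏ a, Q (r a).1 (r a).2 * colr (r a) a) • (Cmat r).det = 0 := by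
    apply Finset.sum_eq_zero
    intro r hr
    have hni := (Finset.mem_filter.mp hr).2
    rw [Function.not_injective_iff] at hni
    obtain ⟨a, b, hab, hne⟩ := hni
    have : (Cmat r).det = 0 :=
      Matrix.det_zero_of_row_eq hne (by show colr (r a) = colr (r b); rw [hab])
    rw [this, smul_zero]
  rw [hnoninj, add_zero]
  rw [← Finset.sum_fiberwise_of_maps_to (g := fun r => univ.image r)
    (t := (Epairs m).powersetCard m) ?_]
  · apply Finset.sum_congr rfl
    intro S hS
    rw [Finset.mem_powersetCard] at hS
    exact fiber_sum hS.1 hS.2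
  · intro r hr
    rw [Finset.mem_filter, Fintype.mem_piFinset] at hr
    rw [Finset.mem_powersetCard]
    constructor
    · intro p hp
      obtain ⟨a, _, rfl⟩ := Finset.mem_image.mp hp
      exact hr.1 a
    · rw [Finset.card_image_of_injective _ hr.2, Finset.card_univ, Fintype.card_fin]

end Expand

section TauDet

variable {m : ℕ}

open Classical in
lemma det_sq_val {S : Finset (Fin (m+1) × Fin (m+1))}
    (hS : S ∈ (Epairs m).powersetCard m) :
    ((Cmat (gcan S)).det)^2 = if (graphOf S).IsTree then 1 else 0 := by
  rw [Finset.mem_powersetCard] at hS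
  obtain ⟨hsub, hcard⟩ := hS
  by_cases htree : (graphOf S).IsTree
  · rw [if_pos htree]
    have hne := cmat_det_ne_zero_of_connected (gcan S) (gcan_surj hcard) htree.isConnected
    rcases cmat_det_cases hsub (gcan S) (gcan_mem hcard) with h | h | h
    · exact absurd h hne
    · rw [h]; norm_num
    · rw [h]; norm_num
  · rw [if_neg htree]
    have hnc : ¬ (graphOf S).Connected := fun hc =>
      htree ⟨hc, acyclic_of_connected hsub hcard hc⟩
    rw [cmat_det_eq_zero_of_not_connected hsub (gcan S) (gcan_mem hcard) hnc]
    norm_num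

open Classical in
lemma filter_graphOf {S : Finset (Fin (m+1) × Fin (m+1))} (hS : S ⊆ Epairs m) :
    univ.filter (fun p : Fin (m+1) × Fin (m+1) =>
      p.1 < p.2 ∧ (graphOf S).Adj p.1 p.2) = S := by
  ext p
  simp only [Finset.mem_filter, Finset.mem_univ, true_and]
  constructor
  · rintro ⟨hlt, -, (h | h)⟩
    · exact h
    · have : p.2 < p.1 := by simpa [Epairs] using hS h
      exact absurd (hlt.trans this) (lt_irrefl _)
  · intro hp
    have hlt : p.1 < p.2 := by simpa [Epairs] using hS hp
    exact ⟨hlt, ne_of_lt hlt, Or.inl hp⟩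

open Classical in
lemma graphOf_filter (T : SimpleGraph (Fin (m+1))) :
    graphOf (univ.filter (fun p : Fin (m+1) × Fin (m+1) =>
      p.1 < p.2 ∧ T.Adj p.1 p.2)) = T := by
  ext a b
  show (a ≠ b ∧ _) ↔ _
  simp only [Finset.mem_filter, Finset.mem_univ, true_and]
  constructor
  · rintro ⟨hne, (⟨-, h⟩ | ⟨-, h⟩)⟩
    · exact h
    · exact h.symm
  · intro h
    refine ⟨T.ne_of_adj h, ?_⟩
    rcases lt_or_gt_of_ne (T.ne_of_adj h) with hlt | hlt
    · exact Or.inl ⟨hlt, h⟩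
    · exact Or.inr ⟨hlt, h.symm⟩

open Classical in
lemma card_ST {T : SimpleGraph (Fin (m+1))} (hT : T.IsTree) :
    (univ.filter (fun p : Fin (m+1) × Fin (m+1) =>
      p.1 < p.2 ∧ T.Adj p.1 p.2)).card = m := by
  have hcard := hT.card_edgeFinset
  rw [Fintype.card_fin] at hcard
  have hbij : (univ.filter (fun p : Fin (m+1) × Fin (m+1) =>
      p.1 < p.2 ∧ T.Adj p.1 p.2)).card = T.edgeFinset.card := by
    apply Finset.card_bij (fun p _ => s(p.1, p.2))
    · intro p hp
      rw [Finset.mem_filter] at hp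
      rw [SimpleGraph.mem_edgeFinset]
      exact SimpleGraph.mem_edgeSet T |>.mpr hp.2.2
    · intro p hp q hq h
      rw [Finset.mem_filter] at hp hq
      rcases (Sym2.mk_eq_mk_iff).mp h with h' | h'
      · exact h'
      · exfalso
        have h1 : p.1 = q.2 := congrArg Prod.fst h'
        have h2 : p.2 = q.1 := congrArg Prod.snd h'
        have := hp.2.1
        rw [h1, h2] at this
        exact absurd (hq.2.1.trans this) (lt_irrefl _)
    · intro e he
      rw [SimpleGraph.mem_edgeFinset] at he
      induction e with
      | _ a b =>
        have hadj : T.Adj a b := (SimpleGraph.mem_edgeSet T).mp he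
        rcases lt_trichotomy a b with hlt | heq | hlt
        · exact ⟨(a, b), Finset.mem_filter.mpr ⟨Finset.mem_univ _, hlt, hadj⟩, rfl⟩
        · exact absurd (heq ▸ hadj) (T.loopless.irrefl a)
        · exact ⟨(b, a), Finset.mem_filter.mpr ⟨Finset.mem_univ _, hlt, hadj.symm⟩,
            Sym2.eq_swap.symm⟩
  omega

open Classical in
lemma tau_eq_det {Q : Matrix (Fin (m+1)) (Fin (m+1)) ℝ} (hQ : Q.IsSymm) :
    tau Q = (redT Q).det := by
  rw [det_redT hQ]
  have step1 : ∀ S ∈ (Epairs m).powersetCard m,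
      (∏ p ∈ S, Q p.1 p.2) * ((Cmat (gcan S)).det)^2
      = if (graphOf S).IsTree then (∏ p ∈ S, Q p.1 p.2) else 0 := by
    intro S hS
    rw [det_sq_val hS]
    by_cases h : (graphOf S).IsTree <;> simp [h]
  rw [Finset.sum_congr rfl step1, ← Finset.sum_filter]
  rw [tau]
  refine Finset.sum_bij (fun T _ =>
    univ.filter (fun p : Fin (m+1) × Fin (m+1) => p.1 < p.2 ∧ T.Adj p.1 p.2)) ?_ ?_ ?_ ?_
  · intro T hT
    rw [Finset.mem_filter] at hT ⊢
    refine ⟨Finset.mem_powersetCard.mpr ⟨?_, card_ST hT.2⟩, ?_⟩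
    · intro p hp
      rw [Finset.mem_filter] at hp
      simp only [Epairs, Finset.mem_filter, Finset.mem_univ, true_and]
      exact hp.2.1
    · rw [graphOf_filter]
      exact hT.2
  · intro T hT T' hT' h
    have := congrArg graphOf h
    rwa [graphOf_filter, graphOf_filter] at this
  · intro S hS
    rw [Finset.mem_filter] at hS
    have hsub := (Finset.mem_powersetCard.mp hS.1).1
    exact ⟨graphOf S, Finset.mem_filter.mpr ⟨Finset.mem_univ _, hS.2⟩,
      filter_graphOf hsub⟩
  · intro T _
    rfl

end TauDet

section LogDet

open Real

open scoped MatrixOrder in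
lemma logdet_strictConcave {n : ℕ} {A B : Matrix (Fin n) (Fin n) ℝ}
    (hA : A.PosDef) (hB : B.PosDef) (hAB : A ≠ B) {t : ℝ} (h0 : 0 < t) (h1 : t < 1) :
    t * Real.log A.det + (1 - t) * Real.log B.det <
      Real.log (t • A + (1 - t) • B).det := by
  classical
  have hApsd := hA.posSemidef
  set R := CFC.sqrt A with hRdef
  have hRps : R.PosSemidef := (CFC.sqrt_nonneg A).posSemidef
  have hRR : R * R = A := CFC.sqrt_mul_sqrt_self A hApsd.nonneg
  have hdetA : 0 < A.det := hA.det_pos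
  have hdetR : R.det ≠ 0 := by
    intro h
    rw [← hRR, Matrix.det_mul, h, mul_zero] at hdetA
    exact lt_irrefl 0 hdetA
  have hRinv : R * R⁻¹ = 1 := Matrix.mul_nonsing_inv R hdetR.isUnit
  have hRinv' : R⁻¹ * R = 1 := Matrix.nonsing_inv_mul R hdetR.isUnit
  have hRherm : R.IsHermitian := hRps.1
  have hRinvherm : R⁻¹.IsHermitian := hRherm.inv
  set M := R⁻¹ * B * R⁻¹ with hMdef
  have hM : M.PosDef := by
    refine Matrix.PosDef.of_dotProduct_mulVec_pos ?_ ?_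
    · show Mᴴ = M
      rw [hMdef, Matrix.conjTranspose_mul, Matrix.conjTranspose_mul,
        hRinvherm.eq, hB.1.eq, Matrix.mul_assoc]
    · intro x hx
      have hy : R⁻¹ *ᵥ x ≠ 0 := by
        intro h
        apply hx
        have : R *ᵥ (R⁻¹ *ᵥ x) = x := by
          rw [Matrix.mulVec_mulVec, hRinv, Matrix.one_mulVec]
        rw [h, Matrix.mulVec_zero] at this
        exact this.symm
      have := hB.dotProduct_mulVec_pos hy
      have hform : star x ⬝ᵥ M *ᵥ x = star (R⁻¹ *ᵥ x) ⬝ᵥ B *ᵥ (R⁻¹ *ᵥ x) := by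
        simp only [star_trivial]
        rw [hMdef, ← Matrix.mulVec_mulVec, ← Matrix.mulVec_mulVec,
          Matrix.dotProduct_mulVec x R⁻¹]
        congr 1
        show x ᵥ* R⁻¹ = R⁻¹ *ᵥ x
        have htrans : R⁻¹ᵀ = R⁻¹ := by
          ext i j
          simpa using congrFun (congrFun hRinvherm.eq i) j
        conv_rhs => rw [← htrans]
        rw [Matrix.mulVec_transpose]
      rw [hform]
      exact this
  have hBRMR : B = R * M * R := by
    rw [hMdef]
    rw [show R * (R⁻¹ * B * R⁻¹) * R = (R * R⁻¹) * B * (R⁻¹ * R) by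
      simp only [Matrix.mul_assoc]]
    rw [hRinv, hRinv', Matrix.one_mul, Matrix.mul_one]
  have hMne1 : M ≠ 1 := by
    intro h
    apply hAB
    rw [← hRR, hBRMR, h, Matrix.mul_one]
  -- spectral decomposition of M
  have hMh : M.IsHermitian := hM.1
  set μ := hMh.eigenvalues with hμdef
  have hμpos : ∀ i, 0 < μ i := hM.eigenvalues_pos
  set U := (Matrix.IsHermitian.eigenvectorUnitary hMh : Matrix (Fin n) (Fin n) ℝ) with hUdef
  have hUU : U * star U = 1 :=
    (Matrix.mem_unitaryGroup_iff).mp (Matrix.IsHermitian.eigenvectorUnitary hMh).2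
  have hspec : M = U * Matrix.diagonal (RCLike.ofReal ∘ μ) * star U :=
    Matrix.IsHermitian.spectral_theorem hMh
  have hofReal : (RCLike.ofReal ∘ μ : Fin n → ℝ) = μ := by
    funext i; simp
  rw [hofReal] at hspec
  -- determinant computations
  have hdetU : U.det * (star U).det = 1 := by
    rw [← Matrix.det_mul, hUU, Matrix.det_one]
  have hcombo : t • (1 : Matrix (Fin n) (Fin n) ℝ) + (1 - t) • M =
      U * Matrix.diagonal (fun i => t + (1 - t) * μ i) * star U := by
    have hdiag : Matrix.diagonal (fun i => t + (1 - t) * μ i)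
        = t • Matrix.diagonal (fun _ => (1:ℝ)) + (1 - t) • Matrix.diagonal μ := by
      ext i j
      by_cases h : i = j
      · subst h
        simp [Matrix.diagonal_apply_eq]
      · simp [Matrix.diagonal_apply_ne _ h, h]
    rw [hdiag, Matrix.mul_add, Matrix.add_mul, Matrix.mul_smul, Matrix.mul_smul,
      Matrix.smul_mul, Matrix.smul_mul, Matrix.diagonal_one, Matrix.mul_one, hUU, ← hspec]
  have hdetConj : ∀ v : Fin n → ℝ, (U * Matrix.diagonal v * star U).det = ∏ i, v i := by
    intro v
    rw [Matrix.det_mul, Matrix.det_mul, Matrix.det_diagonal]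
    linear_combination (∏ i, v i) * hdetU
  have hdetM : M.det = ∏ i, μ i := by rw [hspec]; exact hdetConj μ
  have hdetCombo : (t • (1 : Matrix (Fin n) (Fin n) ℝ) + (1 - t) • M).det
      = ∏ i, (t + (1 - t) * μ i) := by rw [hcombo]; exact hdetConj _
  have hAc : t • A + (1 - t) • B = R * (t • (1 : Matrix (Fin n) (Fin n) ℝ)
      + (1 - t) • M) * R := by
    conv_lhs => rw [← hRR, hBRMR]
    rw [Matrix.mul_add, Matrix.add_mul, Matrix.mul_smul, Matrix.mul_smul,
      Matrix.smul_mul, Matrix.smul_mul, Matrix.mul_one]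
  have hdetMpos : 0 < M.det := hM.det_pos
  have hμne : ∀ i, μ i ≠ 0 := fun i => (hμpos i).ne'
  have hprodpos : ∀ i, 0 < t + (1 - t) * μ i := fun i => by nlinarith [hμpos i]
  have hR2pos : 0 < R.det ^ 2 := by positivity
  have hdA : A.det = R.det ^ 2 := by rw [← hRR, Matrix.det_mul]; ring
  have hdB : B.det = R.det ^ 2 * M.det := by
    rw [hBRMR, Matrix.det_mul, Matrix.det_mul]; ring
  have hdC : (t • A + (1 - t) • B).det = R.det ^ 2 * ∏ i, (t + (1 - t) * μ i) := by
    rw [hAc, Matrix.det_mul, Matrix.det_mul, hdetCombo]; ring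
  have hstrict : ∀ i, μ i ≠ 1 → (1 - t) * Real.log (μ i) < Real.log (t + (1 - t) * μ i) := by
    intro i h
    have := strictConcaveOn_log_Ioi.2 (Set.mem_Ioi.mpr one_pos)
      (Set.mem_Ioi.mpr (hμpos i)) (fun hh => h hh.symm) h0 (by linarith : (0:ℝ) < 1 - t)
      (by ring)
    simpa [Real.log_one] using this
  have hexist : ∃ i, μ i ≠ 1 := by
    by_contra hall
    push_neg at hall
    apply hMne1
    rw [hspec, show Matrix.diagonal μ = 1 from by
      rw [← Matrix.diagonal_one]; exact congrArg Matrix.diagonal (funext hall),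
      Matrix.mul_one, hUU]
  obtain ⟨i0, hi0⟩ := hexist
  have key : (1 - t) * Real.log M.det < Real.log (∏ i, (t + (1 - t) * μ i)) := by
    rw [hdetM, Real.log_prod (fun i _ => hμne i),
      Real.log_prod (fun i _ => (hprodpos i).ne'), Finset.mul_sum]
    apply Finset.sum_lt_sum
    · intro i _
      by_cases h : μ i = 1
      · rw [h]; simp
      · exact le_of_lt (hstrict i h)
    · exact ⟨i0, Finset.mem_univ _, hstrict i0 hi0⟩
  rw [hdA, hdB, hdC, Real.log_mul hR2pos.ne' hdetMpos.ne',
    Real.log_mul hR2pos.ne' (Finset.prod_pos (fun i _ => hprodpos i)).ne']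
  calc t * Real.log (R.det ^ 2) + (1 - t) * (Real.log (R.det ^ 2) + Real.log M.det)
      = Real.log (R.det ^ 2) + (1 - t) * Real.log M.det := by ring
    _ < Real.log (R.det ^ 2) + Real.log (∏ i, (t + (1 - t) * μ i)) := by linarith [key]

end LogDet

section Glue

variable {m : ℕ}

lemma theta_symm {Q : Matrix (Fin (m+1)) (Fin (m+1)) ℝ} (hQ : Q.IsSymm)
    (i j : Fin (m+1)) : thetaOf Q j i = thetaOf Q i j := by
  unfold thetaOf
  simp only [Matrix.of_apply]
  by_cases h : i = j
  · subst h; rfl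
  · rw [if_neg h, if_neg (fun hh => h hh.symm), hQ.apply i j]

lemma theta_row_sum (Q : Matrix (Fin (m+1)) (Fin (m+1)) ℝ) (i : Fin (m+1)) :
    ∑ j, thetaOf Q i j = 0 := by
  rw [← Finset.add_sum_erase _ _ (Finset.mem_univ i)]
  have h1 : thetaOf Q i i = ∑ l ∈ univ.filter (fun l => l ≠ i), Q i l := by
    simp [thetaOf]
  have h2 : ∀ j ∈ univ.erase i, thetaOf Q i j = -Q i j := by
    intro j hj
    have hne : j ≠ i := (Finset.mem_erase.mp hj).1
    rw [thetaOf]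
    simp only [Matrix.of_apply]
    rw [if_neg (fun hh : i = j => hne hh.symm)]
  rw [h1, Finset.sum_congr rfl h2, Finset.sum_neg_distrib, Finset.filter_ne' univ i]
  ring

lemma theta_mulVec_one (Q : Matrix (Fin (m+1)) (Fin (m+1)) ℝ) :
    thetaOf Q *ᵥ (fun _ => (1:ℝ)) = 0 := by
  funext i
  simp [Matrix.mulVec, dotProduct, theta_row_sum Q i]

lemma theta_vecMul_one {Q : Matrix (Fin (m+1)) (Fin (m+1)) ℝ} (hQ : Q.IsSymm) :
    (fun _ => (1:ℝ)) ᵥ* thetaOf Q = 0 := by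
  funext j
  show ∑ i, 1 * thetaOf Q i j = 0
  simp only [one_mul]
  rw [Finset.sum_congr rfl (fun i _ => theta_symm hQ j i)]
  exact theta_row_sum Q j

lemma redT_posdef {Q : Matrix (Fin (m+1)) (Fin (m+1)) ℝ} (hQ : memQ Q) :
    (redT Q).PosDef := by
  obtain ⟨hsym, hdiag, hpos⟩ := hQ
  refine Matrix.PosDef.of_dotProduct_mulVec_pos ?_ ?_
  · show (redT Q)ᴴ = redT Q
    ext a b
    simp only [Matrix.conjTranspose_apply, star_trivial]
    exact theta_symm hsym a.castSucc b.castSucc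
  · intro x hx
    set z : Fin (m+1) → ℝ := (Fin.snoc x (0:ℝ) : Fin (m+1) → ℝ) with hz
    set c : ℝ := (∑ j, x j) / (m+1) with hc
    set w : Fin (m+1) → ℝ := z - c • ((fun _ => (1:ℝ)) : Fin (m+1) → ℝ) with hw
    have hzlast : z (Fin.last m) = 0 := by simp [hz]
    have hzcast : ∀ a : Fin m, z a.castSucc = x a := fun a => by simp [hz]
    have hsumz : ∑ i, z i = ∑ j, x j := by
      rw [Fin.sum_univ_castSucc, hzlast, add_zero]
      exact Finset.sum_congr rfl (fun a _ => hzcast a)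
    have hm1 : ((m:ℝ) + 1) ≠ 0 := by positivity
    have hsumw : ∑ i, w i = 0 := by
      simp only [hw, Pi.sub_apply, Pi.smul_apply, smul_eq_mul, mul_one,
        Finset.sum_sub_distrib, hsumz, Finset.sum_const, Finset.card_univ,
        Fintype.card_fin, nsmul_eq_mul, hc]
      push_cast
      field_simp
      ring
    have hwne : w ≠ 0 := by
      intro h
      have hzc : ∀ i, z i = c := fun i => by
        have := congrFun h i
        simpa [hw, sub_eq_zero] using this
      have hc0 : c = 0 := (hzc (Fin.last m)).symm.trans hzlast
      apply hx
      funext j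
      have := hzc j.castSucc
      rw [hc0, ← hzcast j] at *
      exact this
    have hkey := hpos w hwne hsumw
    have hmv : thetaOf Q *ᵥ w = thetaOf Q *ᵥ z := by
      rw [hw, Matrix.mulVec_sub, Matrix.mulVec_smul, theta_mulVec_one, smul_zero, sub_zero]
    have hquad : w ⬝ᵥ thetaOf Q *ᵥ w = z ⬝ᵥ thetaOf Q *ᵥ z := by
      rw [hmv, hw]
      rw [sub_dotProduct, smul_dotProduct]
      have hone : (fun _ => (1:ℝ)) ⬝ᵥ (thetaOf Q *ᵥ z) = 0 := by
        rw [Matrix.dotProduct_mulVec, theta_vecMul_one hsym, zero_dotProduct]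
      rw [hone, smul_zero, sub_zero]
    have hzz : z ⬝ᵥ thetaOf Q *ᵥ z = x ⬝ᵥ redT Q *ᵥ x := by
      show ∑ i, z i * (thetaOf Q *ᵥ z) i = ∑ a, x a * (redT Q *ᵥ x) a
      rw [Fin.sum_univ_castSucc, hzlast, zero_mul, add_zero]
      apply Finset.sum_congr rfl
      intro a _
      rw [hzcast a]
      have hrow : (thetaOf Q *ᵥ z) a.castSucc = (redT Q *ᵥ x) a := by
        show ∑ j, thetaOf Q a.castSucc j * z j = ∑ b, redT Q a b * x b
        rw [Fin.sum_univ_castSucc, hzlast, mul_zero, add_zero]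
        apply Finset.sum_congr rfl
        intro b _
        rw [hzcast b]
        rfl
      rw [hrow]
    show 0 < dotProduct (star x) (redT Q *ᵥ x)
    rw [star_trivial]
    rw [← hzz, ← hquad]
    exact hkey

lemma theta_combo (t : ℝ) (Q₁ Q₂ : Matrix (Fin (m+1)) (Fin (m+1)) ℝ) :
    thetaOf (t • Q₁ + (1 - t) • Q₂) = t • thetaOf Q₁ + (1 - t) • thetaOf Q₂ := by
  ext i j
  simp only [thetaOf, Matrix.of_apply, Matrix.add_apply, Matrix.smul_apply, smul_eq_mul]
  by_cases h : i = j
  · rw [if_pos h, if_pos h, if_pos h, Finset.mul_sum, Finset.mul_sum,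
      ← Finset.sum_add_distrib]
  · rw [if_neg h, if_neg h, if_neg h]
    ring

lemma redT_combo (t : ℝ) (Q₁ Q₂ : Matrix (Fin (m+1)) (Fin (m+1)) ℝ) :
    redT (t • Q₁ + (1 - t) • Q₂) = t • redT Q₁ + (1 - t) • redT Q₂ := by
  unfold redT
  rw [theta_combo]
  ext a b
  simp [Matrix.submatrix_apply, Matrix.add_apply, Matrix.smul_apply]

lemma memQ_combo {Q₁ Q₂ : Matrix (Fin (m+1)) (Fin (m+1)) ℝ}
    (h1 : memQ Q₁) (h2 : memQ Q₂) {t : ℝ} (ht0 : 0 ≤ t) (ht1 : t ≤ 1) :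
    memQ (t • Q₁ + (1 - t) • Q₂) := by
  refine ⟨?_, ?_, ?_⟩
  · show _ᵀ = _
    rw [Matrix.transpose_add, Matrix.transpose_smul, Matrix.transpose_smul, h1.1, h2.1]
  · intro i
    simp [Matrix.add_apply, Matrix.smul_apply, h1.2.1 i, h2.2.1 i]
  · intro x hx hsum
    rw [theta_combo, Matrix.add_mulVec, Matrix.smul_mulVec, Matrix.smul_mulVec,
      dotProduct_add, dotProduct_smul, dotProduct_smul]
    have a1 := h1.2.2 x hx hsum
    have a2 := h2.2.2 x hx hsum
    simp only [smul_eq_mul]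
    rcases lt_or_eq_of_le ht0 with h | h
    · have p1 : 0 < t * (x ⬝ᵥ thetaOf Q₁ *ᵥ x) := mul_pos h a1
      have p2 : 0 ≤ (1 - t) * (x ⬝ᵥ thetaOf Q₂ *ᵥ x) :=
        mul_nonneg (by linarith) a2.le
      linarith
    · rw [← h]
      simpa using a2

lemma redT_inj {Q₁ Q₂ : Matrix (Fin (m+1)) (Fin (m+1)) ℝ}
    (h1 : memQ Q₁) (h2 : memQ Q₂) (h : redT Q₁ = redT Q₂) : Q₁ = Q₂ := by
  obtain ⟨hs1, hd1, -⟩ := h1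
  obtain ⟨hs2, hd2, -⟩ := h2
  have hoff : ∀ i j : Fin (m+1), i ≠ Fin.last m → j ≠ Fin.last m → i ≠ j →
      Q₁ i j = Q₂ i j := by
    intro i j hi hj hij
    obtain ⟨a, rfl⟩ := Fin.exists_castSucc_eq.mpr hi
    obtain ⟨b, rfl⟩ := Fin.exists_castSucc_eq.mpr hj
    have he := congrFun (congrFun h a) b
    simp only [redT, Matrix.submatrix_apply, thetaOf, Matrix.of_apply, if_neg hij] at he
    exact neg_injective he
  have hsum : ∀ a : Fin m,
      ∑ l ∈ univ.filter (fun l => l ≠ a.castSucc), Q₁ a.castSucc l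
      = ∑ l ∈ univ.filter (fun l => l ≠ a.castSucc), Q₂ a.castSucc l := by
    intro a
    have he := congrFun (congrFun h a) a
    simpa [redT, Matrix.submatrix_apply, thetaOf] using he
  have hlastcol : ∀ i : Fin (m+1), i ≠ Fin.last m →
      Q₁ i (Fin.last m) = Q₂ i (Fin.last m) := by
    intro i hi
    obtain ⟨a, rfl⟩ := Fin.exists_castSucc_eq.mpr hi
    have hmem : Fin.last m ∈ univ.filter (fun l => l ≠ a.castSucc) := by
      simp only [Finset.mem_filter, Finset.mem_univ, true_and]
      exact (Fin.castSucc_lt_last a).ne'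
    have e1 := (Finset.add_sum_erase _ (fun l => Q₁ a.castSucc l) hmem)
    have e2 := (Finset.add_sum_erase _ (fun l => Q₂ a.castSucc l) hmem)
    have herase : ∀ l ∈ (univ.filter (fun l => l ≠ a.castSucc)).erase (Fin.last m),
        Q₁ a.castSucc l = Q₂ a.castSucc l := by
      intro l hl
      have hl1 : l ≠ Fin.last m := (Finset.mem_erase.mp hl).1
      have hl2 : l ≠ a.castSucc :=
        (Finset.mem_filter.mp (Finset.mem_of_mem_erase hl)).2
      exact hoff _ _ (Fin.castSucc_lt_last a).ne hl1 (fun hh => hl2 hh.symm)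
    have hq := hsum a
    rw [← e1, ← e2, Finset.sum_congr rfl herase] at hq
    linarith
  ext i j
  by_cases hij : i = j
  · subst hij; rw [hd1, hd2]
  by_cases hi : i = Fin.last m
  · subst hi
    have hj : j ≠ Fin.last m := fun hh => hij hh.symm
    rw [hs1.apply j (Fin.last m), hs2.apply j (Fin.last m)]
    exact hlastcol j hj
  · by_cases hj : j = Fin.last m
    · subst hj
      exact hlastcol i hi
    · exact hoff i j hi hj hij

end Glue

/-- `τ(Q) > 0` on `𝒬`, the set `𝒬` is convex, and `Q ↦ log τ(Q)` is strictly concave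
on `𝒬`. -/
theorem log_tau_strictly_concave {d : ℕ} (hd : 0 < d) :
    (∀ Q : Matrix (Fin d) (Fin d) ℝ, memQ Q → 0 < tau Q) ∧
    (∀ Q₁ Q₂ : Matrix (Fin d) (Fin d) ℝ, memQ Q₁ → memQ Q₂ →
      ∀ t : ℝ, 0 ≤ t → t ≤ 1 → memQ (t • Q₁ + (1 - t) • Q₂)) ∧
    (∀ Q₁ Q₂ : Matrix (Fin d) (Fin d) ℝ, memQ Q₁ → memQ Q₂ → Q₁ ≠ Q₂ →
      ∀ t : ℝ, 0 < t → t < 1 →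
        t * Real.log (tau Q₁) + (1 - t) * Real.log (tau Q₂) <
          Real.log (tau (t • Q₁ + (1 - t) • Q₂))) := by
  obtain ⟨m, rfl⟩ : ∃ m, d = m + 1 := ⟨d - 1, (Nat.succ_pred_eq_of_pos hd).symm⟩
  refine ⟨?_, ?_, ?_⟩
  · intro Q hQ
    rw [tau_eq_det hQ.1]
    exact (redT_posdef hQ).det_pos
  · intro Q₁ Q₂ h1 h2 t ht0 ht1
    exact memQ_combo h1 h2 ht0 ht1
  · intro Q₁ Q₂ h1 h2 hne t ht0 ht1
    have hc : memQ (t • Q₁ + (1 - t) • Q₂) := memQ_combo h1 h2 ht0.le ht1.le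
    rw [tau_eq_det h1.1, tau_eq_det h2.1, tau_eq_det hc.1, redT_combo]
    exact logdet_strictConcave (redT_posdef h1) (redT_posdef h2)
      (fun hh => hne (redT_inj h1 h2 hh)) ht0 ht1
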